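/- Let g = h^s where h ∈ F_{q^m}[x] is irreducible and s ≥ 1, and let deg g = t. Consider the map μ_g : F_{q^m}[x]/(g) → F_{q^m}[x]/(g) given by a mod g ↦ a^q - a mod g. Then the kernel of μ_g consists exactly of the classes of constant polynomials with coefficients in F_q; in particular dim_{F_q} ker μ_g = 1 and the image of μ_g has F_q-dimension mt - 1. -/

import Mathlib

open Polynomial

lemma nilp_eq_zero {R : Type*} [CommRing R] {x : R} (hx : IsNilpotent x) {q : ℕ} (hq : 2 ≤ q)
    (h : x ^ q = x) : x = 0 := by
  have hu : IsUnit (x ^ (q - 1) - 1) := ((hx.pow_of_pos (by omega : q - 1 ≠ 0)).isUnit_sub_one)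
  have hmul : x * (x ^ (q - 1) - 1) = 0 := by
    rw [mul_sub, mul_one, ← pow_succ', show q - 1 + 1 = q by omega, h, sub_self]
  exact (hu.mul_left_eq_zero).mp hmul

lemma sol_field (F K : Type*) [Field F] [Fintype F] [CommRing K] [IsDomain K] [Algebra F K] {q : ℕ}
    (hq : Fintype.card F = q) {x : K} (hx : x ^ q = x) :
    x ∈ Set.range (algebraMap F K) := by
  classical
  have hq2 : 2 ≤ q := hq ▸ Fintype.one_lt_card
  set P : K[X] := X ^ q - X with hP
  have hPdeg : P.natDegree = q := by
    rw [hP, natDegree_sub_eq_left_of_natDegree_lt, natDegree_X_pow]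
    rw [natDegree_X_pow, natDegree_X]; omega
  have hP0 : P ≠ 0 := fun h0 => by simp [h0, hP] at hPdeg; omega
  have hroot : ∀ c : F, P.IsRoot (algebraMap F K c) := by
    intro c
    simp only [hP, IsRoot, eval_sub, eval_pow, eval_X, sub_eq_zero]
    rw [← map_pow, ← hq, FiniteField.pow_card]
  set T : Finset K := Finset.univ.image (algebraMap F K) with hT
  have hTcard : T.card = q := by
    rw [hT, Finset.card_image_of_injective _ (algebraMap F K).injective, Finset.card_univ, hq]
  have hsub : T ⊆ P.roots.toFinset := by
    intro y hy
    rw [hT, Finset.mem_image] at hy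
    obtain ⟨c, -, rfl⟩ := hy
    rw [Multiset.mem_toFinset, mem_roots hP0]
    exact hroot c
  have hle : P.roots.toFinset.card ≤ q := by
    calc P.roots.toFinset.card ≤ Multiset.card P.roots := P.roots.toFinset_card_le
    _ ≤ P.natDegree := P.card_roots'
    _ = q := hPdeg
  have : T = P.roots.toFinset := Finset.eq_of_subset_of_card_le hsub (hTcard ▸ hle)
  have hxT : x ∈ T := by
    rw [this, Multiset.mem_toFinset, mem_roots hP0]
    simp [hP, IsRoot, sub_eq_zero, hx]
  rw [hT, Finset.mem_image] at hxT
  obtain ⟨c, -, rfl⟩ := hxT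
  exact ⟨c, rfl⟩

set_option maxHeartbeats 1000000 in
set_option synthInstance.maxHeartbeats 100000 in
/-- For `g = h^s` a power of an irreducible polynomial of total degree `t`,
the kernel of `μ_g : a mod g ↦ a^q - a mod g` on `F_{q^m}[x]/(g)` consists
exactly of the classes of constants from `F_q` (so has `F_q`-dimension 1),
and the image of `μ_g` has `F_q`-dimension `m*t - 1`. -/
theorem stmt4 (F E : Type*) [Field F] [Fintype F] [Field E] [Fintype E]
    [Algebra F E] (q m : ℕ) (hq : Fintype.card F = q)
    (hE : Fintype.card E = q ^ m) (hm : 2 ≤ m)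
    (h : E[X]) (hirr : Irreducible h) (s : ℕ) (hs : 1 ≤ s)
    (g : E[X]) (hg : g = h ^ s) (t : ℕ) (ht : g.natDegree = t) :
    {x : E[X] ⧸ Ideal.span {g} | x ^ q - x = 0}
      = Set.range (algebraMap F (E[X] ⧸ Ideal.span {g})) ∧
    Module.finrank F
      (Submodule.span F {x : E[X] ⧸ Ideal.span {g} | x ^ q - x = 0}) = 1 ∧
    Module.finrank F
      (Submodule.span F {y : E[X] ⧸ Ideal.span {g} | ∃ x, y = x ^ q - x})
      = m * t - 1 := by
  classical
  have hq2 : 2 ≤ q := hq ▸ Fintype.one_lt_card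
  have hh0 : h ≠ 0 := hirr.ne_zero
  have hg0 : g ≠ 0 := hg ▸ pow_ne_zero s hh0
  have hgu : ¬ IsUnit g := by
    rw [hg]
    exact fun hu => hirr.not_isUnit (isUnit_of_dvd_unit (dvd_pow_self h (by omega)) hu)
  set R := E[X] ⧸ Ideal.span {g} with hR
  haveI : Nontrivial R := Ideal.Quotient.nontrivial_iff.mpr (by rwa [Ne, Ideal.span_singleton_eq_top])
  have hinj : Function.Injective (algebraMap F R) := (algebraMap F R).injective
  -- characteristic
  set p := ringChar F with hpdef
  haveI : CharP F p := ringChar.charP F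
  obtain ⟨k, hpprime, hqpk⟩ := FiniteField.card F p
  haveI : Fact p.Prime := ⟨hpprime⟩
  have hqk : q = p ^ (k : ℕ) := by rw [← hq, hqpk]
  haveI : CharP R p := charP_of_injective_algebraMap hinj p
  -- kernel set equality
  have Sker : {x : R | x ^ q - x = 0} = Set.range (algebraMap F R) := by
    ext x
    simp only [Set.mem_setOf_eq, Set.mem_range]
    constructor
    · intro hx
      have hx' : x ^ q = x := by rwa [sub_eq_zero] at hx
      -- pass to the residue field
      set K := E[X] ⧸ Ideal.span {h} with hK
      haveI : (Ideal.span {h}).IsPrime := (Ideal.span_singleton_prime hh0).mpr hirr.prime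
      have hle : Ideal.span {g} ≤ Ideal.span {h} :=
        Ideal.span_singleton_le_span_singleton.mpr (hg ▸ dvd_pow_self h (by omega))
      set π := Ideal.Quotient.factor hle with hπ
      have hπx : (π x) ^ q = π x := by rw [← map_pow, hx']
      obtain ⟨c, hc⟩ := sol_field F K hq hπx
      have hcomm : ∀ d : F, π (algebraMap F R d) = algebraMap F K d := by
        intro d
        rfl
      set n := x - algebraMap F R c with hn
      have hπn : π n = 0 := by rw [hn, π.map_sub, hcomm, hc, sub_self]
      have hnil : IsNilpotent n := by
        obtain ⟨a, ha⟩ := Ideal.Quotient.mk_surjective n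
        have : Ideal.Quotient.mk (Ideal.span {h}) a = 0 := by
          rw [← Ideal.Quotient.factor_mk hle, ha, hπn]
        rw [Ideal.Quotient.eq_zero_iff_mem, Ideal.mem_span_singleton] at this
        refine ⟨s, ?_⟩
        rw [← ha, ← map_pow, Ideal.Quotient.eq_zero_iff_mem, Ideal.mem_span_singleton, hg]
        exact pow_dvd_pow_of_dvd this s
      have hnq : n ^ q = n := by
        have hcc : (algebraMap F R c) ^ q = algebraMap F R c := by
          rw [← map_pow, ← hq, FiniteField.pow_card]
        rw [hn, hqk, sub_pow_char_pow, ← hqk, hx', hcc]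
      have hn0 : x - algebraMap F R c = 0 := nilp_eq_zero hnil hq2 hnq
      exact ⟨c, (sub_eq_zero.mp hn0).symm⟩
    · rintro ⟨c, rfl⟩
      rw [← map_pow, ← hq, FiniteField.pow_card, sub_self]
  -- dimensions
  have hfinE : Module.finrank F E = m := by
    have := Module.card_eq_pow_finrank (K := F) (V := E)
    rw [hE, hq] at this
    exact (Nat.pow_right_injective hq2 this.symm)
  haveI : FiniteDimensional E R := Module.Finite.of_basis (AdjoinRoot.powerBasis hg0).basis
  have hfinR : Module.finrank E R = t := by
    rw [← ht]
    exact (AdjoinRoot.powerBasis hg0).finrank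
  haveI : FiniteDimensional F R := FiniteDimensional.trans F E R
  have hdim : Module.finrank F R = m * t := by
    rw [← Module.finrank_mul_finrank F E R, hfinE, hfinR]
  -- the linear map μ
  have hsmul : ∀ (c : F) (x : R), (c • x) ^ q - c • x = c • (x ^ q - x) := by
    intro c x
    rw [_root_.smul_pow, show c ^ q = c from hq ▸ FiniteField.pow_card c, smul_sub]
  set μ : R →ₗ[F] R :=
    { toFun := fun x => x ^ q - x
      map_add' := by
        intro x y
        show (x + y) ^ q - (x + y) = (x ^ q - x) + (y ^ q - y)
        rw [hqk, add_pow_char_pow]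
        ring
      map_smul' := by
        intro c x
        simpa using hsmul c x } with hμ
  have hsetker : {x : R | x ^ q - x = 0} = (LinearMap.ker μ : Set R) := by
    ext x
    simp only [Set.mem_setOf_eq, SetLike.mem_coe, LinearMap.mem_ker, hμ, LinearMap.coe_mk,
      AddHom.coe_mk]
  have hker : LinearMap.ker μ = LinearMap.range (Algebra.linearMap F R) := by
    ext x
    have h1 : x ∈ LinearMap.ker μ ↔ x ∈ {x : R | x ^ q - x = 0} := by rw [hsetker]; rfl
    rw [h1, Sker]
    simp only [Set.mem_range, LinearMap.mem_range, Algebra.linearMap_apply]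
  have hkerdim : Module.finrank F (LinearMap.ker μ) = 1 := by
    rw [hker, LinearMap.finrank_range_of_inj hinj, Module.finrank_self]
  refine ⟨Sker, ?_, ?_⟩
  · rw [hsetker, Submodule.span_eq, hkerdim]
  · have hrange : Submodule.span F {y : R | ∃ x, y = x ^ q - x} = LinearMap.range μ := by
      rw [show {y : R | ∃ x, y = x ^ q - x} = (LinearMap.range μ : Set R) from ?_,
        Submodule.span_eq]
      ext y
      simp only [Set.mem_setOf_eq, SetLike.mem_coe, LinearMap.mem_range]
      constructor
      · rintro ⟨x, rfl⟩; exact ⟨x, rfl⟩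
      · rintro ⟨x, rfl⟩; exact ⟨x, rfl⟩
    rw [hrange]
    have := LinearMap.finrank_range_add_finrank_ker μ
    rw [hkerdim, hdim] at this
    exact Nat.eq_sub_of_add_eq this
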